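/- Caro–Wei bound: every finite simple graph G contains an independent set I with |I| ≥ ∑_{v ∈ V(G)} 1/(1 + deg(v)), the inequality holding in the real numbers. -/

import Mathlib

theorem caro_wei_aux {V : Type*} [Fintype V] [DecidableEq V] (G : SimpleGraph V)
    [DecidableRel G.Adj] (s : Finset V) :
    ∃ I : Finset V, I ⊆ s ∧ (∀ u ∈ I, ∀ v ∈ I, ¬ G.Adj u v) ∧
      (∑ v ∈ s, (1 : ℝ) / (1 + ((G.neighborFinset v ∩ s).card : ℝ))) ≤ I.card := by
  induction s using Finset.strongInduction with
  | _ s ih =>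
    rcases s.eq_empty_or_nonempty with rfl | hs
    · exact ⟨∅, by simp⟩
    · obtain ⟨v, hvs, hvmin⟩ :=
        s.exists_min_image (fun v => (G.neighborFinset v ∩ s).card) hs
      set N : Finset V := insert v (G.neighborFinset v ∩ s) with hN
      have hNs : N ⊆ s := by
        intro u hu
        rcases Finset.mem_insert.mp hu with rfl | hu
        · exact hvs
        · exact (Finset.mem_inter.mp hu).2
      have hvN : v ∈ N := Finset.mem_insert_self _ _
      have hsub : s \ N ⊂ s := by
        refine Finset.ssubset_iff_of_subset (Finset.sdiff_subset) |>.mpr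
          ⟨v, hvs, by simp [hvN]⟩
      obtain ⟨I', hI'sub, hI'ind, hI'sum⟩ := ih (s \ N) hsub
      have hvI' : v ∉ I' := fun h => (Finset.mem_sdiff.mp (hI'sub h)).2 hvN
      refine ⟨insert v I', ?_, ?_, ?_⟩
      · intro u hu
        rcases Finset.mem_insert.mp hu with rfl | hu
        · exact hvs
        · exact (Finset.mem_sdiff.mp (hI'sub hu)).1
      · have hvadj : ∀ u ∈ I', ¬ G.Adj v u := by
          intro u hu hadj
          have hus : u ∈ s \ N := hI'sub hu
          have : u ∈ N := Finset.mem_insert.mpr (Or.inr (Finset.mem_inter.mpr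
            ⟨(SimpleGraph.mem_neighborFinset G v u).mpr hadj, (Finset.mem_sdiff.mp hus).1⟩))
          exact (Finset.mem_sdiff.mp hus).2 this
        intro u hu w hw
        rcases Finset.mem_insert.mp hu with hu | hu <;>
          rcases Finset.mem_insert.mp hw with hw | hw
        · rw [hu, hw]; exact G.loopless.irrefl v
        · rw [hu]; exact hvadj w hw
        · rw [hw]; intro h; exact hvadj u hu h.symm
        · exact hI'ind u hu w hw
      · -- sum bound
        have hsplit : (∑ u ∈ s ∩ N, (1:ℝ) / (1 + ((G.neighborFinset u ∩ s).card : ℝ)))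
            + ∑ u ∈ s \ N, (1:ℝ) / (1 + ((G.neighborFinset u ∩ s).card : ℝ))
            = ∑ u ∈ s, (1:ℝ) / (1 + ((G.neighborFinset u ∩ s).card : ℝ)) :=
          Finset.sum_inter_add_sum_sdiff s N _
        have hsN : s ∩ N = N := Finset.inter_eq_right.mpr hNs
        have hNcard : (N.card : ℝ) = 1 + ((G.neighborFinset v ∩ s).card : ℝ) := by
          have : v ∉ G.neighborFinset v ∩ s := by
            simp [SimpleGraph.mem_neighborFinset]
          rw [hN, Finset.card_insert_of_notMem this]
          push_cast; ring
        have hpos : ∀ u : V, (0:ℝ) < 1 + ((G.neighborFinset u ∩ s).card : ℝ) := by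
          intro u; positivity
        have h1 : (∑ u ∈ s ∩ N, (1:ℝ) / (1 + ((G.neighborFinset u ∩ s).card : ℝ))) ≤ 1 := by
          rw [hsN]
          calc (∑ u ∈ N, (1:ℝ) / (1 + ((G.neighborFinset u ∩ s).card : ℝ)))
              ≤ ∑ u ∈ N, (1:ℝ) / (1 + ((G.neighborFinset v ∩ s).card : ℝ)) := by
                refine Finset.sum_le_sum fun u hu => ?_
                apply one_div_le_one_div_of_le (hpos v)
                have := hvmin u (hNs hu)
                linarith [(Nat.cast_le (α := ℝ)).mpr this]
            _ = N.card * ((1:ℝ) / (1 + ((G.neighborFinset v ∩ s).card : ℝ))) := by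
                rw [Finset.sum_const, nsmul_eq_mul]
            _ = 1 := by
                rw [hNcard]
                field_simp
        have h2 : (∑ u ∈ s \ N, (1:ℝ) / (1 + ((G.neighborFinset u ∩ s).card : ℝ)))
            ≤ ∑ u ∈ s \ N, (1:ℝ) / (1 + ((G.neighborFinset u ∩ (s \ N)).card : ℝ)) := by
          refine Finset.sum_le_sum fun u hu => ?_
          apply one_div_le_one_div_of_le
          · positivity
          · have hsub2 : G.neighborFinset u ∩ (s \ N) ⊆ G.neighborFinset u ∩ s :=
              Finset.inter_subset_inter_left Finset.sdiff_subset
            have := Finset.card_le_card hsub2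
            linarith [(Nat.cast_le (α := ℝ)).mpr this]
        have hcard : ((insert v I').card : ℝ) = I'.card + 1 := by
          rw [Finset.card_insert_of_notMem hvI']; push_cast; ring
        rw [hcard, ← hsplit]
        linarith

theorem caro_wei_bound
    {V : Type*} [Fintype V] (G : SimpleGraph V) [DecidableRel G.Adj] :
    ∃ I : Finset V, (∀ u ∈ I, ∀ v ∈ I, ¬ G.Adj u v) ∧
      (∑ v : V, (1 : ℝ) / (1 + G.degree v)) ≤ I.card := by
  classical
  obtain ⟨I, -, hind, hsum⟩ := caro_wei_aux G (Finset.univ)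
  refine ⟨I, hind, ?_⟩
  calc (∑ v : V, (1 : ℝ) / (1 + G.degree v))
      = ∑ v ∈ Finset.univ, (1:ℝ) / (1 + ((G.neighborFinset v ∩ Finset.univ).card : ℝ)) := by
        refine Finset.sum_congr rfl fun v _ => ?_
        rw [Finset.inter_univ, ← SimpleGraph.card_neighborFinset_eq_degree]
    _ ≤ I.card := hsum
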